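/- Parallel comparison via subtraction with masked MSB: let m ≥ 1 and let a, b be naturals with a, b < 2^m. Write MSB = 2^(m-1) and Mask = 2^(m-1) - 1. Let a' = a AND Mask, b' = b AND Mask, and let c = ((a' + Mask) - b') AND MSB (the carry into the MSB position of (a' - b') + Mask). Define Carry = (c AND (a AND MSB)) OR ((c OR (a AND MSB)) AND NOT (b AND MSB)) (where x AND NOT y clears from x the bits of y). Then Carry = MSB if a > b, and Carry = 0 if a ≤ b. -/

import Mathlib

private lemma and_msb_aux (k x : ℕ) (hx : x < 2 ^ (k + 1)) :
    x &&& 2 ^ k = if 2 ^ k ≤ x then 2 ^ k else 0 := by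
  rw [Nat.and_two_pow, Nat.testBit_eq_decide_div_mod_eq]
  have hx' : x < 2 ^ k * 2 := by rw [pow_succ] at hx; omega
  rcases Nat.lt_or_ge x (2 ^ k) with h | h
  · rw [Nat.div_eq_of_lt h]
    simp [Nat.not_le.mpr h]
  · have h1 : 1 ≤ x / 2 ^ k := (Nat.le_div_iff_mul_le (Nat.two_pow_pos k)).mpr (by omega)
    have h2 : x / 2 ^ k < 2 := Nat.div_lt_of_lt_mul hx'
    have : x / 2 ^ k = 1 := by omega
    simp [this, h]

private lemma ldiff_zero' (x : ℕ) : Nat.ldiff x 0 = x := by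
  apply Nat.eq_of_testBit_eq; simp [Nat.testBit_ldiff]

private lemma zero_ldiff' (x : ℕ) : Nat.ldiff 0 x = 0 := by
  apply Nat.eq_of_testBit_eq; simp [Nat.testBit_ldiff]

private lemma ldiff_self' (x : ℕ) : Nat.ldiff x x = 0 := by
  apply Nat.eq_of_testBit_eq; simp [Nat.testBit_ldiff]

theorem parallel_comparison (m a b : ℕ) (hm : 1 ≤ m) (ha : a < 2 ^ m) (hb : b < 2 ^ m) :
    let MSB := 2 ^ (m - 1)
    let Mask := 2 ^ (m - 1) - 1
    let a' := a &&& Mask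
    let b' := b &&& Mask
    let c := ((a' + Mask) - b') &&& MSB
    let Carry := (c &&& (a &&& MSB)) ||| Nat.ldiff (c ||| (a &&& MSB)) (b &&& MSB)
    Carry = if b < a then MSB else 0 := by
  intro MSB Mask a' b' c Carry
  obtain ⟨k, rfl⟩ : ∃ k, m = k + 1 := ⟨m - 1, by omega⟩
  set M := 2 ^ k with hMdef
  have hM : 0 < M := Nat.two_pow_pos k
  have ha'' : a' = a % M := Nat.and_two_pow_sub_one_eq_mod a k
  have hb'' : b' = b % M := Nat.and_two_pow_sub_one_eq_mod b k
  have haM : a % M < M := Nat.mod_lt _ hM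
  have hbM : b % M < M := Nat.mod_lt _ hM
  have hc : c = if b % M < a % M then M else 0 := by
    have hMask : Mask = M - 1 := rfl
    rw [show c = ((a' + Mask) - b') &&& M from rfl, ha'', hb'',
      and_msb_aux k _ (by omega)]
    have : M ≤ a % M + Mask - b % M ↔ b % M < a % M := by omega
    exact if_congr this rfl rfl
  have haMSB : a &&& MSB = if M ≤ a then M else 0 := and_msb_aux k a ha
  have hbMSB : b &&& MSB = if M ≤ b then M else 0 := and_msb_aux k b hb
  have ha2 : a < M * 2 := by rw [pow_succ] at ha; omega
  have hb2 : b < M * 2 := by rw [pow_succ] at hb; omega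
  have haR : a % M = a - (if M ≤ a then M else 0) := by
    split
    · rw [Nat.mod_eq_sub_mod ‹_›]; exact Nat.mod_eq_of_lt (by omega)
    · rw [Nat.sub_zero]; exact Nat.mod_eq_of_lt (by omega)
  have hbR : b % M = b - (if M ≤ b then M else 0) := by
    split
    · rw [Nat.mod_eq_sub_mod ‹_›]; exact Nat.mod_eq_of_lt (by omega)
    · rw [Nat.sub_zero]; exact Nat.mod_eq_of_lt (by omega)
  show (c &&& (a &&& MSB)) ||| Nat.ldiff (c ||| (a &&& MSB)) (b &&& MSB)
      = if b < a then MSB else 0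
  show (c &&& (a &&& MSB)) ||| Nat.ldiff (c ||| (a &&& MSB)) (b &&& MSB)
      = if b < a then M else 0
  by_cases hA : M ≤ a <;> by_cases hB : M ≤ b <;>
    by_cases hab : b % M < a % M <;>
    simp only [haMSB, hbMSB, hc, hA, hB, hab, if_true, if_false,
      eq_self_iff_true, not_true, not_false_iff,
      Nat.and_self, Nat.zero_and, Nat.and_zero, Nat.or_zero, Nat.zero_or, Nat.or_self,
      ldiff_zero', zero_ldiff', ldiff_self'] at haR hbR ⊢ <;>
    (first | omega | (split <;> omega))
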